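/- For every m ∈ {1,…,K}: (1 − Σ_{l=1}^K a_{ml} p_{ml}) · ν_m = Σ_{l=1}^K a_{ml} λ_l. Equivalently, defining θ^{(m)}_m by e^{θ^{(m)}_m} = (1 − Σ_{l=1}^K a_{ml} p_{ml}) μ_m / (Σ_{l=1}^K a_{ml} λ_l), one has e^{−θ^{(m)}_m} = ρ_m = ν_m/μ_m. -/

import Mathlib

open Matrix

/-- Part of Theorem 2.1 (the:H): for every `m`,
`(1 − Σ_l a_{ml} p_{ml}) ν_m = Σ_l a_{ml} λ_l`; equivalently, if
`e^{θ_m^{(m)}} = (1 − Σ_l a_{ml} p_{ml}) μ_m / (Σ_l a_{ml} λ_l)` then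
`e^{−θ_m^{(m)}} = ρ_m = ν_m / μ_m`. Here `ν = (I − Pᵀ)⁻¹ λ`, `a m m = 1` and,
for `l ≠ m`, `(a_{ml})_{l≠m} = ((I−P)(m|m))⁻¹ p_{·m}`. -/
theorem stmt_5 {K : ℕ} (P : Matrix (Fin (K + 1)) (Fin (K + 1)) ℝ)
    (hP : ∀ k l, 0 ≤ P k l) (hProw : ∀ k, ∑ l, P k l ≤ 1)
    (hspec : ∀ z ∈ spectrum ℂ (P.map Complex.ofReal), ‖z‖ < 1)
    (lam mu : Fin (K + 1) → ℝ) (hlam : ∀ k, 0 < lam k) (hmu : ∀ k, 0 < mu k)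
    (ν : Fin (K + 1) → ℝ)
    (hν : ν = ((1 : Matrix (Fin (K + 1)) (Fin (K + 1)) ℝ) - Pᵀ)⁻¹ *ᵥ lam)
    (hνpos : ∀ k, 0 < ν k)
    (a : Fin (K + 1) → Fin (K + 1) → ℝ)
    (ha_diag : ∀ m, a m m = 1)
    (ha : ∀ (m : Fin (K + 1)) (i : Fin K),
      a m (m.succAbove i)
        = ((((1 : Matrix (Fin (K + 1)) (Fin (K + 1)) ℝ) - P).submatrix m.succAbove m.succAbove)⁻¹
            *ᵥ (fun j => P (m.succAbove j) m)) i)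
    (m : Fin (K + 1)) :
    (1 - ∑ l, a m l * P m l) * ν m = ∑ l, a m l * lam l
      ∧ ∀ θm : ℝ,
          Real.exp θm = (1 - ∑ l, a m l * P m l) * mu m / (∑ l, a m l * lam l) →
          Real.exp (-θm) = ν m / mu m := by
  set Q : Matrix (Fin (K + 1)) (Fin (K + 1)) ℝ :=
    (1 : Matrix (Fin (K + 1)) (Fin (K + 1)) ℝ) - P with hQ
  -- Step 1: (1 - Pᵀ) is invertible (else ν = 0)
  have hdet : IsUnit ((1 - Pᵀ : Matrix (Fin (K + 1)) (Fin (K + 1)) ℝ)).det := by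
    by_contra h
    have : ((1 : Matrix (Fin (K + 1)) (Fin (K + 1)) ℝ) - Pᵀ)⁻¹ = 0 :=
      Matrix.nonsing_inv_apply_not_isUnit _ h
    rw [this] at hν
    have := hνpos m
    simp [hν] at this
  -- Step 2: column relations: ∀ l, ∑ k, ν k * Q k l = lam l
  have hQν : (1 - Pᵀ) *ᵥ ν = lam := by
    rw [hν, Matrix.mulVec_mulVec, Matrix.mul_nonsing_inv _ hdet, Matrix.one_mulVec]
  have hcol : ∀ l, ∑ k, ν k * Q k l = lam l := by
    intro l
    have := congrFun hQν l
    simp only [Matrix.mulVec, dotProduct, Matrix.sub_apply, Matrix.transpose_apply,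
      Matrix.one_apply] at this ⊢
    rw [← this]
    apply Finset.sum_congr rfl
    intro k _
    rw [hQ]
    simp only [Matrix.sub_apply, Matrix.one_apply]
    by_cases hkl : k = l
    · subst hkl; simp; ring
    · simp [hkl, Ne.symm hkl]; ring
  -- Step 3: the principal submatrix B = Q(m|m) is invertible
  set B : Matrix (Fin K) (Fin K) ℝ := Q.submatrix m.succAbove m.succAbove with hB
  have hBrow : ∀ i j, B i j = (if i = j then 1 else 0) - P (m.succAbove i) (m.succAbove j) := by
    intro i j
    simp only [hB, hQ, Matrix.submatrix_apply, Matrix.sub_apply, Matrix.one_apply]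
    congr 1
    simp [Fin.succAbove_right_injective.eq_iff]
  -- y := ν restricted; c := vecMul y B is positive
  have hyB : ∀ l, ∑ k, ν (m.succAbove k) * B k l
      = lam (m.succAbove l) + ν m * P m (m.succAbove l) := by
    intro l
    have h1 := hcol (m.succAbove l)
    rw [Fin.sum_univ_succAbove (fun k => ν k * Q k (m.succAbove l)) m] at h1
    have hQm : Q m (m.succAbove l) = -P m (m.succAbove l) := by
      simp [hQ, Matrix.sub_apply, Matrix.one_apply, (Fin.succAbove_ne m l).symm]
    have : ∑ k, ν (m.succAbove k) * B k l
        = ∑ k, ν (m.succAbove k) * Q (m.succAbove k) (m.succAbove l) := by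
      apply Finset.sum_congr rfl; intro k _; rw [hB]; simp [Matrix.submatrix_apply]
    rw [this]
    rw [hQm] at h1
    linarith
  have hrow : ∀ (u : Fin K → ℝ) (l : Fin K), ∑ k, u k * B k l
      = u l - ∑ k, u k * P (m.succAbove k) (m.succAbove l) := by
    intro u l
    have hterm : ∀ k, u k * B k l
        = (if k = l then u k else 0) - u k * P (m.succAbove k) (m.succAbove l) := by
      intro k
      rw [hBrow]
      by_cases hkl : k = l <;> simp [hkl] <;> ring
    rw [Finset.sum_congr rfl fun k _ => hterm k, Finset.sum_sub_distrib,
      Finset.sum_ite_eq' Finset.univ l (fun k => u k), if_pos (Finset.mem_univ l)]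
  have hBdet : IsUnit B.det := by
    rw [isUnit_iff_ne_zero]
    intro hdB
    have hdBT : Bᵀ.det = 0 := by rw [Matrix.det_transpose]; exact hdB
    obtain ⟨v, hv0, hv⟩ := (Matrix.exists_mulVec_eq_zero_iff).2 hdBT
    -- v satisfies ∀ l, ∑ k, v k * B k l = 0
    have hvB : ∀ l, ∑ k, v k * B k l = 0 := by
      intro l
      have := congrFun hv l
      simp only [Matrix.mulVec, dotProduct, Matrix.transpose_apply, Pi.zero_apply] at this
      rw [← this]
      exact Finset.sum_congr rfl fun k _ => mul_comm _ _
    obtain ⟨j0, hj0⟩ : ∃ j0, v j0 ≠ 0 := by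
      by_contra h
      push_neg at h
      exact hv0 (funext h)
    set w : Fin K → ℝ := if 0 < v j0 then v else -v with hw
    have hwB : ∀ l, ∑ k, w k * B k l = 0 := by
      intro l
      rw [hw]
      by_cases h : 0 < v j0
      · simpa [h] using hvB l
      · simp only [h, if_false]
        rw [← neg_eq_zero, ← Finset.sum_neg_distrib]
        rw [← hvB l]
        apply Finset.sum_congr rfl
        intro k _
        simp only [Pi.neg_apply]
        ring
    have hwj0 : 0 < w j0 := by
      rw [hw]
      rcases lt_trichotomy (v j0) 0 with h | h | h
      · simp [not_lt.2 h.le, h.not_gt]; linarith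
      · exact absurd h hj0
      · simp [h]
    have hne : (Finset.univ : Finset (Fin K)).Nonempty := ⟨j0, Finset.mem_univ _⟩
    obtain ⟨i0, _, hi0⟩ := Finset.exists_max_image Finset.univ
      (fun i => w i / ν (m.succAbove i)) hne
    set α : ℝ := w i0 / ν (m.succAbove i0) with hα
    have hαpos : 0 < α := lt_of_lt_of_le (div_pos hwj0 (hνpos _)) (hi0 j0 (Finset.mem_univ _))
    have hwle : ∀ k, w k ≤ α * ν (m.succAbove k) := by
      intro k
      have := hi0 k (Finset.mem_univ _)
      rw [div_le_iff₀ (hνpos _)] at this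
      linarith [this]
    have hweq : w i0 = α * ν (m.succAbove i0) := by
      rw [hα, div_mul_cancel₀]
      exact (hνpos _).ne'
    -- w i0 = ∑ k, w k * P' k i0 ≤ α * ∑ k, y k * P' k i0 = α*(y i0 - c i0) < α * y i0
    have key : ∀ l, w l = ∑ k, w k * P (m.succAbove k) (m.succAbove l) := by
      intro l
      have h0 := hwB l
      rw [hrow w l] at h0
      linarith
    have hsum : ∀ l, ∑ k, ν (m.succAbove k) * P (m.succAbove k) (m.succAbove l)
        = ν (m.succAbove l) - (lam (m.succAbove l) + ν m * P m (m.succAbove l)) := by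
      intro l
      have := hyB l
      rw [hrow (fun k => ν (m.succAbove k)) l] at this
      linarith
    have hlt : w i0 < w i0 := by
      calc w i0 = ∑ k, w k * P (m.succAbove k) (m.succAbove i0) := key i0
        _ ≤ ∑ k, (α * ν (m.succAbove k)) * P (m.succAbove k) (m.succAbove i0) := by
            apply Finset.sum_le_sum
            intro k _
            exact mul_le_mul_of_nonneg_right (hwle k) (hP _ _)
        _ = α * ∑ k, ν (m.succAbove k) * P (m.succAbove k) (m.succAbove i0) := by
            rw [Finset.mul_sum]; exact Finset.sum_congr rfl fun k _ => by ring
        _ = α * (ν (m.succAbove i0) - (lam (m.succAbove i0) + ν m * P m (m.succAbove i0))) := by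
            rw [hsum i0]
        _ < α * ν (m.succAbove i0) := by
            apply mul_lt_mul_of_pos_left _ hαpos
            have := hlam (m.succAbove i0)
            have := mul_nonneg (hνpos m).le (hP m (m.succAbove i0))
            linarith
        _ = w i0 := hweq.symm
    exact absurd hlt (lt_irrefl _)
  -- Step 4: B *ᵥ x = p where x i = a m (m.succAbove i), p j = P (m.succAbove j) m
  have hBx : B *ᵥ (fun i => a m (m.succAbove i)) = fun j => P (m.succAbove j) m := by
    have : (fun i => a m (m.succAbove i)) = B⁻¹ *ᵥ (fun j => P (m.succAbove j) m) := by
      funext i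
      exact ha m i
    rw [this, Matrix.mulVec_mulVec, Matrix.mul_nonsing_inv _ hBdet, Matrix.one_mulVec]
  -- Step 5: (Q *ᵥ a m) k = 0 for k ≠ m
  have hQa_off : ∀ i : Fin K, ∑ l, Q (m.succAbove i) l * a m l = 0 := by
    intro i
    rw [Fin.sum_univ_succAbove (fun l => Q (m.succAbove i) l * a m l) m]
    have h1 : Q (m.succAbove i) m = -P (m.succAbove i) m := by
      simp [hQ, Matrix.sub_apply, Matrix.one_apply, Fin.succAbove_ne m i]
    have h2 : ∑ j, Q (m.succAbove i) (m.succAbove j) * a m (m.succAbove j)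
        = P (m.succAbove i) m := by
      have := congrFun hBx i
      simp only [Matrix.mulVec, dotProduct] at this
      rw [← this]
      exact Finset.sum_congr rfl fun j _ => by rw [hB]; simp [Matrix.submatrix_apply]
    rw [h1, h2, ha_diag]
    ring
  -- Step 6: (Q *ᵥ a m) m = 1 - ∑ l, a m l * P m l
  have hQa_m : ∑ l, Q m l * a m l = 1 - ∑ l, a m l * P m l := by
    have : ∀ l, Q m l * a m l = (if m = l then a m l else 0) - a m l * P m l := by
      intro l
      rw [hQ]
      simp only [Matrix.sub_apply, Matrix.one_apply]
      by_cases h : m = l <;> simp [h] <;> ring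
    rw [Finset.sum_congr rfl fun l _ => this l, Finset.sum_sub_distrib,
      Finset.sum_ite_eq Finset.univ m (fun l => a m l), if_pos (Finset.mem_univ m), ha_diag]
  -- Main identity
  have main : (1 - ∑ l, a m l * P m l) * ν m = ∑ l, a m l * lam l := by
    have : ∑ l, a m l * lam l = ∑ l, a m l * ∑ k, ν k * Q k l := by
      exact Finset.sum_congr rfl fun l _ => by rw [hcol l]
    rw [this]
    have swap : ∑ l, a m l * ∑ k, ν k * Q k l = ∑ k, ν k * ∑ l, Q k l * a m l := by
      simp_rw [Finset.mul_sum]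
      rw [Finset.sum_comm]
      exact Finset.sum_congr rfl fun k _ => Finset.sum_congr rfl fun l _ => by ring
    rw [swap, Fin.sum_univ_succAbove (fun k => ν k * ∑ l, Q k l * a m l) m]
    rw [hQa_m]
    have : ∑ i, ν (m.succAbove i) * ∑ l, Q (m.succAbove i) l * a m l = 0 := by
      apply Finset.sum_eq_zero
      intro i _
      rw [hQa_off i, mul_zero]
    rw [this, add_zero]
    ring
  refine ⟨main, ?_⟩
  intro θm hθ
  set S := ∑ l, a m l * P m l
  set T := ∑ l, a m l * lam l
  have hT : T ≠ 0 := by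
    intro h
    rw [h, div_zero] at hθ
    exact absurd hθ (Real.exp_pos θm).ne'
  have h1S : (1 - S) ≠ 0 := by
    intro h
    rw [← main, h, zero_mul] at hT
    exact hT rfl
  rw [Real.exp_neg, hθ, inv_div, ← main]
  exact mul_div_mul_left _ _ h1S
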